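/- The set of p ∈ ℝⁿ that are subgradients of a convex function z : G → ℝ at more than one point of G has Lebesgue measure zero. -/

import Mathlib

open MeasureTheory
open scoped ENNReal NNReal

/-- The subdifferential of a convex function `z` on `G` at `x`. -/
def subgrad {n : ℕ} (z : EuclideanSpace ℝ (Fin n) → ℝ)
    (G : Set (EuclideanSpace ℝ (Fin n))) (x : EuclideanSpace ℝ (Fin n)) :
    Set (EuclideanSpace ℝ (Fin n)) :=
  {p | ∀ y ∈ G, z x + (inner ℝ p (y - x) : ℝ) ≤ z y}

/-- The set of `p` that are subgradients of a convex function `z` at more than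
one point of `G` has Lebesgue measure zero. -/
theorem subgradients_at_two_points_null {n : ℕ}
    (G : Set (EuclideanSpace ℝ (Fin n))) (hGo : IsOpen G) (hGc : Convex ℝ G)
    (z : EuclideanSpace ℝ (Fin n) → ℝ) (hz : ConvexOn ℝ G z) :
    volume {p : EuclideanSpace ℝ (Fin n) |
      ∃ x₁ ∈ G, ∃ x₂ ∈ G, x₁ ≠ x₂ ∧ p ∈ subgrad z G x₁ ∧ p ∈ subgrad z G x₂} = 0 := by
  classical
  -- compact exhaustion of G
  set K : ℕ → Set (EuclideanSpace ℝ (Fin n)) := fun m =>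
    Metric.closedBall 0 m ∩ {x | ((m : ℝ≥0∞) + 1)⁻¹ ≤ EMetric.infEdist x Gᶜ} with hK
  have hKG : ∀ m, K m ⊆ G := by
    intro m x hx
    by_contra hxG
    have h0 : EMetric.infEdist x Gᶜ = 0 := EMetric.infEdist_zero_of_mem hxG
    have := hx.2
    rw [Set.mem_setOf_eq, h0, le_zero_iff] at this
    exact (ENNReal.inv_ne_zero.mpr (by simp)) this
  have hKcomp : ∀ m, IsCompact (K m) := by
    intro m
    apply (isCompact_closedBall (0 : EuclideanSpace ℝ (Fin n)) m).of_isClosed_subset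
    · exact (Metric.isClosed_closedBall).inter
        (isClosed_le continuous_const EMetric.continuous_infEdist)
    · exact Set.inter_subset_left
  have hKmono : ∀ {m m' : ℕ}, m ≤ m' → K m ⊆ K m' := by
    intro m m' hmm x hx
    refine ⟨Metric.closedBall_subset_closedBall (by exact_mod_cast hmm) hx.1, ?_⟩
    have h2 : ((m' : ℝ≥0∞) + 1)⁻¹ ≤ ((m : ℝ≥0∞) + 1)⁻¹ :=
      ENNReal.inv_le_inv' (add_le_add_left (by exact_mod_cast hmm) 1)
    exact le_trans h2 hx.2
  have hcover : ∀ x ∈ G, ∃ m, x ∈ K m := by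
    intro x hx
    have hd : 0 < EMetric.infEdist x Gᶜ := by
      apply EMetric.infEdist_pos_iff_notMem_closure.mpr
      rwa [hGo.isClosed_compl.closure_eq, Set.notMem_compl_iff]
    obtain ⟨k, hk⟩ := ENNReal.exists_inv_nat_lt hd.ne'
    refine ⟨max k ⌈‖x‖⌉₊, ?_, ?_⟩
    · rw [Metric.mem_closedBall, dist_zero_right]
      calc ‖x‖ ≤ (⌈‖x‖⌉₊ : ℝ) := Nat.le_ceil _
        _ ≤ ((max k ⌈‖x‖⌉₊ : ℕ) : ℝ) := by exact_mod_cast le_max_right _ _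
    · refine le_of_lt (lt_of_le_of_lt ?_ hk)
      apply ENNReal.inv_le_inv.mpr
      calc (k : ℝ≥0∞) ≤ ((max k ⌈‖x‖⌉₊ : ℕ) : ℝ≥0∞) := by exact_mod_cast le_max_left _ _
        _ ≤ _ := le_self_add
  -- the dual functions
  have hzc : ContinuousOn z G := hz.continuousOn hGo
  set g : ℕ → EuclideanSpace ℝ (Fin n) → ℝ := fun m p => sSup ((fun x => (inner ℝ p x : ℝ) - z x) '' K m) with hg
  have hbdd : ∀ m (p : EuclideanSpace ℝ (Fin n)), BddAbove ((fun x => (inner ℝ p x : ℝ) - z x) '' K m) := by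
    intro m p
    apply (hKcomp m).bddAbove_image
    exact ((continuous_const.inner continuous_id).continuousOn).sub (hzc.mono (hKG m))
  have hnorm : ∀ m, ∀ x ∈ K m, ‖x‖ ≤ m := by
    intro m x hx
    have := hx.1
    rwa [Metric.mem_closedBall, dist_zero_right] at this
  -- Lipschitz bound
  have hlip : ∀ m : ℕ, LipschitzWith (m : ℝ≥0) (g m) := by
    intro m
    rcases Set.eq_empty_or_nonempty (K m) with hKe | hKne
    · have : g m = fun _ => 0 := by
        funext p; simp [hg, hKe, Real.sSup_empty]
      rw [this]; exact LipschitzWith.const' 0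
    · apply LipschitzWith.of_dist_le_mul
      have key : ∀ p q : EuclideanSpace ℝ (Fin n), g m p ≤ g m q + m * dist p q := by
        intro p q
        apply csSup_le (hKne.image _)
        rintro a ⟨x, hx, rfl⟩
        dsimp only
        have h1 : (inner ℝ q x : ℝ) - z x ≤ g m q := le_csSup (hbdd m q) ⟨x, hx, rfl⟩
        have h2 : (inner ℝ p x : ℝ) - (inner ℝ q x : ℝ) ≤ ‖p - q‖ * m := by
          have : (inner ℝ p x : ℝ) - (inner ℝ q x : ℝ) = inner ℝ (p - q) x := by
            rw [inner_sub_left]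
          rw [this]
          calc (inner ℝ (p - q) x : ℝ) ≤ ‖p - q‖ * ‖x‖ := real_inner_le_norm _ _
            _ ≤ ‖p - q‖ * m := by
                apply mul_le_mul_of_nonneg_left (hnorm m x hx) (norm_nonneg _)
        rw [dist_eq_norm]
        nlinarith [h1, h2]
      intro p q
      have k1 := key p q
      have k2 := key q p
      rw [dist_comm q p] at k2
      rw [Real.dist_eq, abs_sub_le_iff]
      constructor <;> push_cast <;> linarith
  -- key duality: subgradient points are gradients of g m
  have key : ∀ (m : ℕ) (p x : EuclideanSpace ℝ (Fin n)), x ∈ K m → p ∈ subgrad z G x →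
      DifferentiableAt ℝ (g m) p → (innerSL ℝ x : EuclideanSpace ℝ (Fin n) →L[ℝ] ℝ) = fderiv ℝ (g m) p := by
    intro m p x hxK hpx hdiff
    -- g m q - ⟪x, q⟫ has a global min at p
    have hmin : ∀ q : EuclideanSpace ℝ (Fin n), g m p - (inner ℝ x p : ℝ) ≤ g m q - (inner ℝ x q : ℝ) := by
      intro q
      have h1 : g m p ≤ (inner ℝ p x : ℝ) - z x := by
        apply csSup_le ((Set.nonempty_of_mem hxK).image _)
        rintro a ⟨y, hy, rfl⟩
        dsimp only
        have := hpx y (hKG m hy)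
        have hsub : (inner ℝ p (y - x) : ℝ) = (inner ℝ p y : ℝ) - inner ℝ p x := inner_sub_right _ _ _
        linarith [this, hsub ▸ this]
      have h2 : (inner ℝ q x : ℝ) - z x ≤ g m q := le_csSup (hbdd m q) ⟨x, hxK, rfl⟩
      have e1 : (inner ℝ p x : ℝ) = inner ℝ x p := real_inner_comm _ _
      have e2 : (inner ℝ q x : ℝ) = inner ℝ x q := real_inner_comm _ _
      linarith
    have hlocmin : IsLocalMin (fun q => g m q - (inner ℝ x q : ℝ)) p :=
      Filter.Eventually.of_forall hmin
    have hdiff2 : DifferentiableAt ℝ (fun q => g m q - (inner ℝ x q : ℝ)) p := by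
      apply hdiff.sub
      exact (innerSL ℝ x).differentiableAt
    have hfd := hlocmin.fderiv_eq_zero
    have hdinner : DifferentiableAt ℝ (fun q : EuclideanSpace ℝ (Fin n) => (inner ℝ x q : ℝ)) p := by
      have := (innerSL ℝ x).differentiableAt (x := p)
      rwa [coe_innerSL_apply] at this
    have hfinner : fderiv ℝ (fun q : EuclideanSpace ℝ (Fin n) => (inner ℝ x q : ℝ)) p
        = innerSL ℝ x := by
      have := (innerSL ℝ x).fderiv (x := p)
      rwa [coe_innerSL_apply] at this
    rw [fderiv_fun_sub hdiff hdinner, hfinner] at hfd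
    exact (sub_eq_zero.mp hfd).symm
  -- the bad set is covered by non-differentiability sets
  have hsub : {p : EuclideanSpace ℝ (Fin n) | ∃ x₁ ∈ G, ∃ x₂ ∈ G, x₁ ≠ x₂ ∧ p ∈ subgrad z G x₁ ∧ p ∈ subgrad z G x₂}
      ⊆ ⋃ m, {p : EuclideanSpace ℝ (Fin n) | ¬ DifferentiableAt ℝ (g m) p} := by
    rintro p ⟨x₁, hx₁, x₂, hx₂, hne, hp₁, hp₂⟩
    obtain ⟨m₁, hm₁⟩ := hcover x₁ hx₁
    obtain ⟨m₂, hm₂⟩ := hcover x₂ hx₂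
    refine Set.mem_iUnion.mpr ⟨max m₁ m₂, ?_⟩
    intro hdiff
    have h1 := key (max m₁ m₂) p x₁ (hKmono (le_max_left _ _) hm₁) hp₁ hdiff
    have h2 := key (max m₁ m₂) p x₂ (hKmono (le_max_right _ _) hm₂) hp₂ hdiff
    apply hne
    have heq : (innerSL ℝ x₁ : EuclideanSpace ℝ (Fin n) →L[ℝ] ℝ) = innerSL ℝ x₂ := h1.trans h2.symm
    have := congrFun (congrArg (fun f : EuclideanSpace ℝ (Fin n) →L[ℝ] ℝ => (f : EuclideanSpace ℝ (Fin n) → ℝ)) heq) (x₁ - x₂)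
    simp only [innerSL_apply_apply] at this
    have : (inner ℝ (x₁ - x₂) (x₁ - x₂) : ℝ) = 0 := by
      rw [inner_sub_left]; linarith [this]
    rwa [inner_self_eq_zero, sub_eq_zero] at this
  apply measure_mono_null hsub
  apply measure_iUnion_null
  intro m
  have := (hlip m).ae_differentiableAt (μ := volume)
  rw [MeasureTheory.ae_iff] at this
  exact this
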